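/- Let W be a competitive nondegenerate TLN matrix and θ > 0. A nonempty subset σ ⊆ [n] is the support of a fixed point if and only if (1) the vector x^σ = θ(I - W_σ)^{-1} 1_σ has all entries strictly positive, and (2) Σ_{i∈σ} W_ki x^σ_i + θ ≤ 0 for all k ∉ σ. -/

import Mathlib

open Finset

/-- `σ` is the support of a fixed point of the TLN obtained by restricting `W` to the
subnetwork on `τ` (take `τ = univ` for the full network). -/
def fpSupport {n : ℕ} (W : Matrix (Fin n) (Fin n) ℝ) (θ : ℝ)
    (τ σ : Finset (Fin n)) : Prop :=
  σ ⊆ τ ∧ ∃ x : Fin n → ℝ,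
    (∀ i, i ∉ τ → x i = 0) ∧
    (∀ i ∈ τ, x i = max 0 ((∑ j ∈ τ, W i j * x j) + θ)) ∧
    (∀ i, 0 < x i ↔ i ∈ σ)

theorem stmt_1 {n : ℕ} (W : Matrix (Fin n) (Fin n) ℝ) (θ : ℝ) (hθ : 0 < θ)
    (hdiag : ∀ i, W i i = 0) (hoff : ∀ i j, i ≠ j → W i j < 0)
    (hdet : ∀ τ : Finset (Fin n),
      ((1 : Matrix τ τ ℝ) - W.submatrix (Subtype.val) (Subtype.val)).det ≠ 0)
    (hcramer : ∀ τ : Finset (Fin n), ∀ i : τ,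
      (Matrix.updateCol ((1 : Matrix τ τ ℝ) - W.submatrix (Subtype.val) (Subtype.val)) i
        (fun _ => θ)).det ≠ 0)
    (σ : Finset (Fin n)) (hσ : σ.Nonempty) :
    fpSupport W θ Finset.univ σ ↔
      ((∀ i : σ,
          0 < (((1 : Matrix σ σ ℝ) - W.submatrix (Subtype.val) (Subtype.val))⁻¹.mulVec
                (fun _ => θ)) i) ∧
       (∀ k, k ∉ σ →
          (∑ i : σ, W k i *
            (((1 : Matrix σ σ ℝ) - W.submatrix (Subtype.val) (Subtype.val))⁻¹.mulVec
              (fun _ => θ)) i) + θ ≤ 0)) := by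
  set A := (1 : Matrix σ σ ℝ) - W.submatrix Subtype.val Subtype.val with hA
  have hAdet : A.det ≠ 0 := hdet σ
  set y := A⁻¹.mulVec (fun _ => θ) with hy
  have hAy : A.mulVec y = fun _ => θ := by
    rw [hy, Matrix.mulVec_mulVec, Matrix.mul_nonsing_inv A (isUnit_iff_ne_zero.mpr hAdet),
      Matrix.one_mulVec]
  have key : ∀ i : σ, y i = (∑ j : σ, W i.1 j.1 * y j) + θ := by
    intro i
    have h := congrFun hAy i
    simp only [hA, Matrix.mulVec, dotProduct, Matrix.sub_apply, Matrix.one_apply,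
      Matrix.submatrix_apply, sub_mul, Finset.sum_sub_distrib, ite_mul, one_mul, zero_mul,
      Finset.sum_ite_eq, Finset.mem_univ, if_true] at h
    linarith
  constructor
  · rintro ⟨-, x, -, hxfix, hsupp⟩
    have hx0 : ∀ i, i ∉ σ → x i = 0 := by
      intro i hi
      have h1 := hxfix i (mem_univ i)
      have h2 : ¬ 0 < x i := fun h => hi ((hsupp i).mp h)
      have : 0 ≤ x i := h1 ▸ le_max_left _ _
      linarith
    have hsum : ∀ i : Fin n, ∑ j, W i j * x j = ∑ j : σ, W i j.1 * x j.1 := by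
      intro i
      rw [Finset.sum_coe_sort σ (fun j => W i j * x j)]
      exact (Finset.sum_subset (subset_univ σ) (fun j _ hj => by
        rw [hx0 j hj, mul_zero])).symm
    -- x restricted to σ satisfies A.mulVec xσ = θ1
    have hfix : ∀ i : σ, x i.1 = (∑ j : σ, W i.1 j.1 * x j.1) + θ := by
      intro i
      have hpos : 0 < x i.1 := (hsupp i.1).mpr i.2
      have h1 := hxfix i.1 (mem_univ i.1)
      rw [hsum] at h1
      rcases le_or_gt ((∑ j : σ, W i.1 j.1 * x j.1) + θ) 0 with h | h
      · rw [max_eq_left h] at h1; linarith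
      · rw [max_eq_right h.le] at h1; exact h1
    have hAx : A.mulVec (fun i : σ => x i.1) = fun _ => θ := by
      funext i
      simp only [hA, Matrix.mulVec, dotProduct, Matrix.sub_apply, Matrix.one_apply,
        Matrix.submatrix_apply, sub_mul, Finset.sum_sub_distrib, ite_mul, one_mul, zero_mul,
        Finset.sum_ite_eq, Finset.mem_univ, if_true]
      have := hfix i
      linarith
    have hyx : y = fun i : σ => x i.1 := by
      rw [hy, ← hAx, Matrix.mulVec_mulVec,
        Matrix.nonsing_inv_mul A (isUnit_iff_ne_zero.mpr hAdet), Matrix.one_mulVec]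
    constructor
    · intro i
      rw [hyx]
      exact (hsupp i.1).mpr i.2
    · intro k hk
      have h1 := hxfix k (mem_univ k)
      rw [hx0 k hk, hsum] at h1
      have hle : (∑ j : σ, W k j.1 * x j.1) + θ ≤ max 0 ((∑ j : σ, W k j.1 * x j.1) + θ) :=
        le_max_right _ _
      rw [← h1] at hle
      rw [hyx]
      exact hle
  · rintro ⟨hpos, hneg⟩
    refine ⟨subset_univ σ, fun i => if h : i ∈ σ then y ⟨i, h⟩ else 0, ?_, ?_, ?_⟩
    · intro i hi; exact absurd (mem_univ i) hi
    · intro i _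
      have hsum : ∀ i : Fin n,
          (∑ j, W i j * (if h : j ∈ σ then y ⟨j, h⟩ else 0)) = ∑ j : σ, W i j.1 * y j := by
        intro i
        rw [← Finset.sum_subset (subset_univ σ) (fun j _ hj => by rw [dif_neg hj, mul_zero])]
        rw [← Finset.sum_coe_sort σ (fun j => W i j * (if h : j ∈ σ then y ⟨j, h⟩ else 0))]
        exact Finset.sum_congr rfl (fun j _ => by rw [dif_pos j.2])
      rw [hsum]
      by_cases h : i ∈ σ
      · simp only [dif_pos h]
        have hk := key ⟨i, h⟩
        have := hpos ⟨i, h⟩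
        rw [max_eq_right (by linarith)]
        exact hk
      · simp only [dif_neg h, max_eq_left (hneg i h)]
    · intro i
      by_cases h : i ∈ σ
      · simp only [dif_pos h]
        exact ⟨fun _ => h, fun _ => hpos ⟨i, h⟩⟩
      · simp only [dif_neg h]
        exact ⟨fun hc => absurd rfl hc.ne, fun hc => absurd hc h⟩
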